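/- Let γ be an (ε)-contour in Λ(l) at σ intersecting exactly one of the four sides F_l^j of Q(Λ(l)). If j = ±1 (a vertical side) then Δ_γ H^ω_{Λ(l)}(σ) ≥ |{horizontal dual bonds in γ}|; if j = ±2 (a horizontal side) then Δ_γ H^ω_{Λ(l)}(σ) ≥ |{vertical dual bonds in γ}|. -/

import Mathlib

open Finset

/-! ### Basic lattice notions for the 2-D Ising model on the square Λ(l) -/

abbrev Site := ℤ × ℤ

/-- `l¹`-distance on `ℤ²`. -/
def d1 (x y : Site) : ℤ := |x.1 - y.1| + |x.2 - y.2|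

/-- `l∞`-distance on `ℤ²`. -/
def dinf (x y : Site) : ℤ := max |x.1 - y.1| |x.2 - y.2|

/-- There is a path from `x` to `y` inside `S` with steps of `d`-distance 1. -/
def ChainIn (d : Site → Site → ℤ) (S : Set Site) (x y : Site) : Prop :=
  ∃ L : List Site, L.Chain' (fun a b => d a b = 1) ∧ L.head? = some x ∧
    L.getLast? = some y ∧ ∀ a ∈ L, a ∈ S

/-- `S` is connected with respect to steps of `d`-distance 1. -/
def ConnIn (d : Site → Site → ℤ) (S : Set Site) : Prop :=
  ∀ x ∈ S, ∀ y ∈ S, ChainIn d S x y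

def lamLo (l : ℕ) : ℤ := 1 - (((l + 1) / 2 : ℕ) : ℤ)
def lamHi (l : ℕ) : ℤ := ((l / 2 : ℕ) : ℤ)

/-- The lamBox the box. -/
noncomputable def lamBox (l : ℕ) : Finset Site := Finset.Icc (lamLo l, lamLo l) (lamHi l, lamHi l)

/-- The exterior boundary `∂_ex Λ(l)`. -/
def extBdry (l : ℕ) : Set Site := {y | y ∉ lamBox l ∧ ∃ x ∈ lamBox l, d1 x y = 1}

/-- An interval of `∂_ex Λ(l)` : an `l∞`-connected subset of it. -/
def IsBdryInterval (l : ℕ) (I : Finset Site) : Prop :=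
  (↑I : Set Site) ⊆ extBdry l ∧ ConnIn dinf ↑I

/-- The four nearest neighbours of a site. -/
def nbrs (x : Site) : Finset Site :=
  {(x.1 + 1, x.2), (x.1 - 1, x.2), (x.1, x.2 + 1), (x.1, x.2 - 1)}

/-- A dual bond, recorded by its two endpoints `v`, a dual vertex `v` standing for the
point `v + (1/2, 1/2)` of the dual lattice. -/
abbrev DBond := Sym2 Site

/-- The dual bond of the nearest-neighbour bond `{x, y}`. -/
def dualBond (x y : Site) : DBond :=
  if x.2 = y.2 then s((min x.1 y.1, x.2 - 1), (min x.1 y.1, x.2))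
  else s((x.1 - 1, min x.2 y.2), (x.1, min x.2 y.2))

/-- `∂Q(Θ)` : the set of dual bonds separating `Θ` from its complement. -/
def contourOf (Θ : Finset Site) : Finset DBond :=
  Θ.biUnion fun x => ((nbrs x).filter (· ∉ Θ)).image fun y => dualBond x y

/-- `Θ` and its complement are `l¹`-connected, so that `∂Q(Θ)` is a contour. -/
def IsContourRegion (Θ : Finset Site) : Prop :=
  ConnIn d1 ↑Θ ∧ ConnIn d1 ((↑Θ : Set Site)ᶜ)

/-- `∂Q(Λ(l))`, as a set of dual bonds. -/
noncomputable def boxBdry (l : ℕ) : Finset DBond := contourOf (lamBox l)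

/-- The dual vertex `v` lies on the side `F_l^j` of `Q(Λ(l))` (`j ∈ {1,-1,2,-2}` for
right, left, top, bottom). -/
def onSide (l : ℕ) (j : ℤ) (v : Site) : Prop :=
  (j = 1 ∧ v.1 = lamHi l ∧ lamLo l - 1 ≤ v.2 ∧ v.2 ≤ lamHi l) ∨
  (j = -1 ∧ v.1 = lamLo l - 1 ∧ lamLo l - 1 ≤ v.2 ∧ v.2 ≤ lamHi l) ∨
  (j = 2 ∧ v.2 = lamHi l ∧ lamLo l - 1 ≤ v.1 ∧ v.1 ≤ lamHi l) ∨
  (j = -2 ∧ v.2 = lamLo l - 1 ∧ lamLo l - 1 ≤ v.1 ∧ v.1 ≤ lamHi l)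

/-- The set of dual bonds `γ` meets the side `F_l^j`. -/
def touches (l : ℕ) (j : ℤ) (γ : Finset DBond) : Prop :=
  ∃ e ∈ γ, ∃ v : Site, v ∈ e ∧ onSide l j v

def HorizCrossing (l : ℕ) (γ : Finset DBond) : Prop := touches l 1 γ ∧ touches l (-1) γ
def VertCrossing (l : ℕ) (γ : Finset DBond) : Prop := touches l 2 γ ∧ touches l (-2) γ

/-- `γ` is neither horizontally nor vertically crossing. -/
def NonCrossing (l : ℕ) (γ : Finset DBond) : Prop :=
  ¬ (HorizCrossing l γ ∨ VertCrossing l γ)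

/-- Two dual bonds are adjacent if they share a dual vertex. -/
def DAdj (a b : DBond) : Prop := ∃ v : Site, v ∈ a ∧ v ∈ b

/-- A set of dual bonds is connected (via shared dual vertices). -/
def DConn (S : Finset DBond) : Prop :=
  ∀ e ∈ S, ∀ f ∈ S, ∃ L : List DBond, L.Chain' DAdj ∧ L.head? = some e ∧
    L.getLast? = some f ∧ ∀ a ∈ L, a ∈ S

/-- Dual bonds separating `Θt` from `Λ(l) \ Θt` inside the lamBox. -/
noncomputable def interiorBdry (l : ℕ) (Θt : Finset Site) : Finset DBond :=
  Θt.biUnion fun x => ((nbrs x).filter fun y => y ∈ lamBox l ∧ y ∉ Θt).image fun y => dualBond x y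

/-- The sites of `Λ(l)` along the side `F_l^j`. -/
def sideSites (l : ℕ) (j : ℤ) (x : Site) : Prop :=
  x ∈ lamBox l ∧ ((j = 1 ∧ x.1 = lamHi l) ∨ (j = -1 ∧ x.1 = lamLo l) ∨
    (j = 2 ∧ x.2 = lamHi l) ∨ (j = -2 ∧ x.2 = lamLo l))

/-- The data of the distinguished connected component `γ̲ = γu` of `γ \ ∂Q(Λ(l))` and of the
region `Θ̃ = Θt` into which a non-crossing contour `γ = ∂Q(Θ)` divides the lamBox: `γu` is a
connected component of `γ \ ∂Q(Λ(l))` dividing `Λ(l)` into the `l¹`-connected pieces `Θt` and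
`Λ(l) \ Θt`, with `Θ ⊆ Θt` and `F_l^i ∪ F_l^j ⊆ ∂Q(Λ(l) \ Θt)` for untouched sides `i, j`. -/
def UnderlineData (l : ℕ) (Θ : Finset Site) (γu : Finset DBond) (Θt : Finset Site) : Prop :=
  γu ⊆ contourOf Θ \ boxBdry l ∧ DConn γu ∧
  (∀ e ∈ contourOf Θ \ boxBdry l, e ∉ γu → ∀ f ∈ γu, ¬ DAdj e f) ∧
  Θ ⊆ Θt ∧ Θt ⊆ lamBox l ∧ ConnIn d1 ↑Θt ∧ ConnIn d1 ↑(lamBox l \ Θt) ∧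
  interiorBdry l Θt = γu ∧
  ∃ i j : ℤ, (i = 1 ∨ i = -1) ∧ (j = 2 ∨ j = -2) ∧
    ¬ touches l i (contourOf Θ) ∧ ¬ touches l j (contourOf Θ) ∧
    (∀ x, sideSites l i x → x ∉ Θt) ∧ (∀ x, sideSites l j x → x ∉ Θt)

/-- `γ̄ = ∂Q(Λ(l)) ∩ ∂Q(Θ̃)`. -/
noncomputable def gammaBar (l : ℕ) (Θt : Finset Site) : Finset DBond := boxBdry l ∩ contourOf Θt

/-- `V_ex(γ)` : sites of the exterior boundary attached to dual bonds of `γ`. -/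
noncomputable def Vex (l : ℕ) (γ : Finset DBond) : Finset Site :=
  (lamBox l).biUnion fun x => (nbrs x).filter fun y => y ∉ lamBox l ∧ dualBond x y ∈ γ

/-- `T_Θ` : flip the spins in `Θ`. -/
def flipC (Θ : Finset Site) (σ : Site → ℤ) : Site → ℤ :=
  fun x => if x ∈ Θ then -σ x else σ x

/-- The Ising Hamiltonian `H^ω_{Λ(l)}(σ)` with boundary condition `ω`. -/
noncomputable def Ham (l : ℕ) (ω : Site → ℝ) (σ : Site → ℤ) : ℝ :=
  -(1/2) * ∑ x ∈ lamBox l, ∑ y ∈ (nbrs x).filter (· ∈ lamBox l), ((σ x * σ y : ℤ) : ℝ)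
    - ∑ x ∈ lamBox l, ∑ y ∈ (nbrs x).filter (· ∉ lamBox l), (σ x : ℝ) * ω y

/-- `Δ_{γ₁,…,γ_p} H^ω_{Λ(l)}(σ) = H(σ) - H(T_{γ₁}∘⋯∘T_{γ_p} σ)`, the contours being
recorded by their regions `Θ(γ_j)`. -/
noncomputable def dH (l : ℕ) (ω : Site → ℝ) (Θs : List (Finset Site)) (σ : Site → ℤ) : ℝ :=
  Ham l ω σ - Ham l ω (Θs.foldr flipC σ)

/-- `C` is an (ε)-cluster in `Λ(l)` at `σ` : a maximal `l¹`-connected component of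
`{x ∈ Λ(l) : σ_x = ε}`. -/
def IsCluster (l : ℕ) (σ : Site → ℤ) (ε : ℤ) (C : Finset Site) : Prop :=
  C.Nonempty ∧ (∀ x ∈ C, x ∈ lamBox l ∧ σ x = ε) ∧ ConnIn d1 ↑C ∧
  ∀ y ∈ lamBox l, σ y = ε → (∃ x ∈ C, d1 x y = 1) → y ∈ C

/-- The `l¹`-connected component of `x` within `S`. -/
def l1Comp (S : Set Site) (x : Site) : Set Site := {y | ChainIn d1 S x y}

/-- `C` together with the bounded components of its complement; `∂Q(fill C)` is the outer
boundary of `Q(C)`. -/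
def fill (C : Finset Site) : Set Site :=
  ↑C ∪ {x | (l1Comp ((↑C : Set Site)ᶜ) x).Finite}

/-- `Θ` is the region `Θ(γ)` of an (ε)-contour `γ` in `Λ(l)` at `σ`. -/
def IsEContour (l : ℕ) (σ : Site → ℤ) (ε : ℤ) (Θ : Finset Site) : Prop :=
  ∃ C : Finset Site, IsCluster l σ ε C ∧ (↑Θ : Set Site) = fill C

/-- A dual bond is horizontal. -/
def isHorizD (e : DBond) : Prop := ∃ v w : Site, e = s(v, w) ∧ v.2 = w.2

/-- A dual bond is vertical. -/
def isVertD (e : DBond) : Prop := ∃ v w : Site, e = s(v, w) ∧ v.1 = w.1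

open Classical in
/-- The number of horizontal dual bonds in `γ`. -/
noncomputable def horizCount (γ : Finset DBond) : ℕ := (γ.filter isHorizD).card

open Classical in
/-- The number of vertical dual bonds in `γ`. -/
noncomputable def vertCount (γ : Finset DBond) : ℕ := (γ.filter isVertD).card

/-! ### Glauber dynamics -/

/-- Configurations on a finite `Λ ⊂ ℤ²` (`true` = spin `+1`, `false` = spin `-1`). -/
abbrev Cfg (Λ : Finset Site) := ↥Λ → Bool

/-- The spin value of a Boolean. -/
def spinVal (b : Bool) : ℝ := if b then 1 else -1

/-- The Ising Hamiltonian on a general finite `Λ`. -/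
noncomputable def HamG (Λ : Finset Site) (ω : Site → ℝ) (σ : Cfg Λ) : ℝ :=
  -(1/2) * ∑ x : ↥Λ, ∑ y : ↥Λ, (if d1 ↑x ↑y = 1 then spinVal (σ x) * spinVal (σ y) else 0)
    - ∑ x : ↥Λ, ∑ y ∈ (nbrs ↑x).filter (· ∉ Λ), spinVal (σ x) * ω y

/-- The finite-volume Gibbs measure `μ^ω_Λ` at inverse temperature `β`. -/
noncomputable def gibbs (Λ : Finset Site) (ω : Site → ℝ) (β : ℝ) (σ : Cfg Λ) : ℝ :=
  Real.exp (-β * HamG Λ ω σ) / ∑ τ : Cfg Λ, Real.exp (-β * HamG Λ ω τ)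

/-- The mean of `f` under the weights `μ`. -/
noncomputable def meanW (Λ : Finset Site) (μ f : Cfg Λ → ℝ) : ℝ := ∑ σ : Cfg Λ, μ σ * f σ

/-- `σ^x` : flip the spin at `x`. -/
def flipAt (Λ : Finset Site) (σ : Cfg Λ) (x : ↥Λ) : Cfg Λ := Function.update σ x (!(σ x))

/-- The generator `A^ω_Λ` of the stochastic Ising model with flip rates `q`. -/
noncomputable def genA (Λ : Finset Site) (q : ↥Λ → Cfg Λ → ℝ) (f : Cfg Λ → ℝ) (σ : Cfg Λ) : ℝ :=
  ∑ x : ↥Λ, q x σ * (f (flipAt Λ σ x) - f σ)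

/-- The variance `μ(|f - μf|²)`. -/
noncomputable def varW (Λ : Finset Site) (μ f : Cfg Λ → ℝ) : ℝ :=
  meanW Λ μ (fun σ => |f σ - meanW Λ μ f| ^ 2)

/-- The spectral gap `gap(Λ, ω, β)` : the infimum of the Rayleigh quotients
`-μ(f A f) / μ(|f - μf|²)`. -/
noncomputable def specGap (Λ : Finset Site) (ω : Site → ℝ) (β : ℝ)
    (q : ↥Λ → Cfg Λ → ℝ) : ℝ :=
  sInf { r | ∃ f : Cfg Λ → ℝ, varW Λ (gibbs Λ ω β) f ≠ 0 ∧
    r = (- meanW Λ (gibbs Λ ω β) fun σ => f σ * genA Λ q f σ) / varW Λ (gibbs Λ ω β) f }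

/-- The `±1`-spin function of a configuration on `Λ(l)` (`0` outside the lamBox). -/
noncomputable def toSpin (l : ℕ) (σ : Cfg (lamBox l)) : Site → ℤ :=
  fun x => if h : x ∈ lamBox l then (if σ ⟨x, h⟩ then 1 else -1) else 0

/-- The magnetization at the origin, `μ^ω_{Λ(l)}(σ₀)`. -/
noncomputable def magZero (l : ℕ) (ω : Site → ℝ) (β : ℝ) : ℝ :=
  ∑ σ : Cfg (lamBox l), gibbs (lamBox l) ω β σ * ((toSpin l σ (0, 0) : ℤ) : ℝ)

/-- The favoured sign `ε_{l,ω}`. -/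
noncomputable def epsSign (l : ℕ) (ω : Site → ℝ) (β : ℝ) : ℤ :=
  if 0 ≤ magZero l ω β then 1 else -1

/-- The trap event `Γ_l` : some (ε)-contour `γ` at `σ` meets `∂Q(Λ(l))` and has
`|γ| ≥ 2δ₁ l`. -/
def GammaEvent (l : ℕ) (δ₁ : ℝ) (ε : ℤ) : Set (Cfg (lamBox l)) :=
  {σ | ∃ Θ : Finset Site, IsEContour l (toSpin l σ) ε Θ ∧
    (contourOf Θ ∩ boxBdry l).Nonempty ∧ 2 * δ₁ * l ≤ ((contourOf Θ).card : ℝ)}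

open Classical in
/-- The Gibbs probability of an event `S ⊂ Ω_{Λ(l)}`. -/
noncomputable def probOf (l : ℕ) (ω : Site → ℝ) (β : ℝ) (S : Set (Cfg (lamBox l))) : ℝ :=
  ∑ σ ∈ Finset.univ.filter (· ∈ S), gibbs (lamBox l) ω β σ

/-- Union of the contours of a list of regions. -/
def unionB (L : List (Finset Site)) : Finset DBond :=
  L.foldr (fun Θ s => contourOf Θ ∪ s) ∅

/-- Union of a list of regions. -/
def unionR (L : List (Finset Site)) : Finset Site :=
  L.foldr (· ∪ ·) ∅

section Aux

set_option linter.unreachableTactic false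
set_option linter.unusedTactic false

lemma mem_lamBox {l : ℕ} {p : Site} : p ∈ lamBox l ↔
    lamLo l ≤ p.1 ∧ p.1 ≤ lamHi l ∧ lamLo l ≤ p.2 ∧ p.2 ≤ lamHi l := by
  simp [lamBox, Finset.mem_Icc, Prod.le_def]; tauto

lemma mem_nbrs {x y : Site} : y ∈ nbrs x ↔
    y = (x.1+1, x.2) ∨ y = (x.1-1, x.2) ∨ y = (x.1, x.2+1) ∨ y = (x.1, x.2-1) := by
  simp [nbrs]

lemma nbrs_d1 {x y : Site} (h : y ∈ nbrs x) : d1 x y = 1 := by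
  rcases mem_nbrs.1 h with h|h|h|h <;> subst h <;> simp [d1] <;> omega

lemma nbrs_symm {x y : Site} (h : y ∈ nbrs x) : x ∈ nbrs y := by
  rcases mem_nbrs.1 h with h|h|h|h <;> subst h <;> rw [mem_nbrs] <;>
    simp [Prod.ext_iff] <;> omega

lemma nbrs_ne {x y : Site} (h : y ∈ nbrs x) : y ≠ x := by
  rcases mem_nbrs.1 h with h|h|h|h <;> subst h <;> simp [Prod.ext_iff] <;> omega

lemma dualBond_r (x : Site) : dualBond x (x.1+1, x.2) = s((x.1, x.2-1), (x.1, x.2)) := by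
  simp [dualBond, min_eq_left (by omega : x.1 ≤ x.1 + 1)]

lemma dualBond_l (x : Site) : dualBond x (x.1-1, x.2) = s((x.1-1, x.2-1), (x.1-1, x.2)) := by
  simp [dualBond, min_eq_right (by omega : x.1 - 1 ≤ x.1)]

lemma dualBond_u (x : Site) : dualBond x (x.1, x.2+1) = s((x.1-1, x.2), (x.1, x.2)) := by
  rw [dualBond, if_neg (by omega)]
  simp [min_eq_left (by omega : x.2 ≤ x.2 + 1)]

lemma dualBond_d (x : Site) : dualBond x (x.1, x.2-1) = s((x.1-1, x.2-1), (x.1, x.2-1)) := by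
  rw [dualBond, if_neg (by omega)]
  simp [min_eq_right (by omega : x.2 - 1 ≤ x.2)]

lemma dualBond_inj {x y x' y' : Site} (h : y ∈ nbrs x) (h' : y' ∈ nbrs x')
    (he : dualBond x y = dualBond x' y') : (x = x' ∧ y = y') ∨ (x = y' ∧ y = x') := by
  rcases mem_nbrs.1 h with h|h|h|h <;> rcases mem_nbrs.1 h' with h2|h2|h2|h2 <;>
    subst h <;> subst h2 <;>
    simp only [dualBond_r, dualBond_l, dualBond_u, dualBond_d, Sym2.eq_iff] at he <;>
    simp only [Prod.ext_iff] at he ⊢ <;> omega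

lemma mem_contourOf {Θ : Finset Site} {e : DBond} : e ∈ contourOf Θ ↔
    ∃ x ∈ Θ, ∃ y ∈ nbrs x, y ∉ Θ ∧ e = dualBond x y := by
  simp only [contourOf, Finset.mem_biUnion, Finset.mem_image, Finset.mem_filter]
  constructor
  · rintro ⟨x, hx, y, ⟨hy, hyn⟩, rfl⟩; exact ⟨x, hx, y, hy, hyn, rfl⟩
  · rintro ⟨x, hx, y, hy, hyn, rfl⟩; exact ⟨x, hx, y, ⟨hy, hyn⟩, rfl⟩

lemma chainIn_single {d : Site → Site → ℤ} {S : Set Site} {x : Site} (hx : x ∈ S) :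
    ChainIn d S x x :=
  ⟨[x], List.isChain_singleton x, rfl, rfl, by simpa⟩

lemma ChainIn.cons' {d : Site → Site → ℤ} {S : Set Site} {x y z : Site}
    (hxy : d x y = 1) (hx : x ∈ S) (h : ChainIn d S y z) : ChainIn d S x z := by
  obtain ⟨L, hch, hh, hl, hm⟩ := h
  cases L with
  | nil => simp at hh
  | cons a L' =>
    have ha : a = y := by simpa using hh
    subst ha
    refine ⟨x :: a :: L', ?_, rfl, by simpa using hl, ?_⟩
    · exact List.isChain_cons_cons.2 ⟨hxy, hch⟩
    · intro b hb
      rcases List.mem_cons.1 hb with rfl | hb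
      · exact hx
      · exact hm b hb

lemma ChainIn.snoc' {d : Site → Site → ℤ} {S : Set Site} {x y z : Site}
    (h : ChainIn d S x y) (hyz : d y z = 1) (hz : z ∈ S) : ChainIn d S x z := by
  obtain ⟨L, hch, hh, hl, hm⟩ := h
  cases L with
  | nil => simp at hh
  | cons a L' =>
    refine ⟨(a :: L') ++ [z], ?_, by simpa using hh,
      by simp only [← List.cons_append, List.getLast?_concat], ?_⟩
    · refine List.IsChain.append hch (by simp) ?_
      intro b hb c hc
      have hb' : y = b := by
        rw [hl] at hb; simpa using hb
      have hc' : z = c := by simpa using hc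
      subst hb'; subst hc'; exact hyz
    · intro b hb
      rcases List.mem_append.1 hb with hb | hb
      · exact hm b hb
      · simp at hb; subst hb; exact hz

lemma mem_comp_ray {S : Set Site} {x : Site} (f : ℕ → Site) (h0 : f 0 = x)
    (hS : ∀ n, f n ∈ S) (hstep : ∀ n, d1 (f n) (f (n+1)) = 1) :
    ∀ n, f n ∈ l1Comp S x := by
  intro n
  induction n with
  | zero => rw [h0]; exact chainIn_single (h0 ▸ hS 0)
  | succ n ih => exact ChainIn.snoc' ih (hstep n) (hS (n+1))

lemma not_fill_of_ray {C : Finset Site} {x : Site} (f : ℕ → Site) (h0 : f 0 = x)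
    (hstep : ∀ n, d1 (f n) (f (n+1)) = 1) (hC : ∀ n, f n ∉ C)
    (hinj : Function.Injective f) : x ∉ fill C := by
  intro hx
  have hxC : x ∉ (C : Set Site) := by simpa using h0 ▸ hC 0
  have hfin : (l1Comp ((C : Set Site))ᶜ x).Finite := by
    rcases (Set.mem_union _ _ _).1 hx with h | h
    · exact absurd h hxC
    · exact h
  have hinf : (l1Comp ((C : Set Site))ᶜ x).Infinite := by
    apply Set.infinite_of_injective_forall_mem hinj
    intro n
    exact mem_comp_ray f h0 (fun n => by simpa using hC n) hstep n
  exact hinf hfin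

lemma theta_subset {l : ℕ} {σ : Site → ℤ} {ε : ℤ} {Θ : Finset Site}
    (hc : IsEContour l σ ε Θ) : ∀ x ∈ Θ, x ∈ lamBox l := by
  obtain ⟨C, hC, hfill⟩ := hc
  have hCbox : ∀ x ∈ C, x ∈ lamBox l := fun x hx => (hC.2.1 x hx).1
  intro x hx
  by_contra hxb
  have hxf : x ∈ fill C := by rw [← hfill]; exact hx
  rw [mem_lamBox] at hxb
  have hdir : x.1 < lamLo l ∨ lamHi l < x.1 ∨ x.2 < lamLo l ∨ lamHi l < x.2 := by omega
  have key : ∀ g : ℕ → Site, g 0 = x → (∀ n, g n ∉ lamBox l) →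
      (∀ n, d1 (g n) (g (n+1)) = 1) → Function.Injective g → False := by
    intro g h0 hbox hstep hinj
    exact not_fill_of_ray g h0 hstep (fun n h => hbox n (hCbox _ h)) hinj hxf
  rcases hdir with h | h | h | h
  · exact key (fun n => (x.1 - n, x.2)) (by simp)
      (fun n => by rw [mem_lamBox]; push_neg; intro h1; omega)
      (fun n => by simp only [d1]; push_cast; simp)
      (fun n m hnm => by simp [Prod.ext_iff] at hnm; omega)
  · exact key (fun n => (x.1 + n, x.2)) (by simp)
      (fun n => by rw [mem_lamBox]; push_neg; intro h1 h2; omega)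
      (fun n => by simp only [d1]; push_cast; simp)
      (fun n m hnm => by simp [Prod.ext_iff] at hnm; omega)
  · exact key (fun n => (x.1, x.2 - n)) (by simp)
      (fun n => by rw [mem_lamBox]; push_neg; intro h1 h2 h3; omega)
      (fun n => by simp only [d1]; push_cast; simp)
      (fun n m hnm => by simp [Prod.ext_iff] at hnm; omega)
  · exact key (fun n => (x.1, x.2 + n)) (by simp)
      (fun n => by rw [mem_lamBox]; push_neg; intro h1 h2 h3; omega)
      (fun n => by simp only [d1]; push_cast; simp)
      (fun n m hnm => by simp [Prod.ext_iff] at hnm; omega)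

lemma cross_spin {l : ℕ} {σ : Site → ℤ} {ε : ℤ} {Θ : Finset Site}
    (hσ : ∀ x ∈ lamBox l, σ x = 1 ∨ σ x = -1) (hε : ε = 1 ∨ ε = -1)
    (hc : IsEContour l σ ε Θ) {x y : Site} (hx : x ∈ Θ) (hy : y ∉ Θ)
    (hd : d1 x y = 1) : σ x = ε ∧ (y ∈ lamBox l → σ y = -ε) := by
  obtain ⟨C, hC, hfill⟩ := hc
  have hyf : y ∉ fill C := by rw [← hfill]; simpa using hy
  have hyC : y ∉ C := fun h => hyf (Or.inl (by simpa using h))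
  have hyfin : ¬ (l1Comp ((C : Set Site))ᶜ y).Finite := fun h => hyf (Or.inr h)
  have hxC : x ∈ C := by
    by_contra hxC
    have hxf : x ∈ fill C := by rw [← hfill]; simpa using hx
    have hxfin : (l1Comp ((C : Set Site))ᶜ x).Finite := by
      rcases (Set.mem_union _ _ _).1 hxf with h | h
      · exact absurd (by simpa using h) hxC
      · exact h
    exact hyfin (hxfin.subset (fun z hz => ChainIn.cons' hd (by simpa using hxC) hz))
  refine ⟨(hC.2.1 x hxC).2, fun hybox => ?_⟩
  have hne : σ y ≠ ε := by
    intro heq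
    exact hyC (hC.2.2.2 y hybox heq ⟨x, hxC, hd⟩)
  rcases hσ y hybox with h | h <;> rcases hε with rfl | rfl <;> omega

open Classical in
/-- Ordered nearest-neighbour pairs inside the box separated by `Θ`. -/
noncomputable def Ein (l : ℕ) (Θ : Finset Site) : Finset ((_ : Site) × Site) :=
  ((lamBox l).sigma fun x => (nbrs x).filter (· ∈ lamBox l)).filter
    fun z => ¬ (z.1 ∈ Θ ↔ z.2 ∈ Θ)

open Classical in
/-- Oriented crossing pairs: `z.1 ∈ Θ`, `z.2 ∉ Θ`, both in the box. -/
noncomputable def Ecross (l : ℕ) (Θ : Finset Site) : Finset ((_ : Site) × Site) :=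
  ((lamBox l).sigma fun x => (nbrs x).filter (· ∈ lamBox l)).filter
    fun z => z.1 ∈ Θ ∧ z.2 ∉ Θ

open Classical in
/-- Pairs from `Θ` to the exterior of the box. -/
noncomputable def Eout (l : ℕ) (Θ : Finset Site) : Finset ((_ : Site) × Site) :=
  ((lamBox l).sigma fun x => (nbrs x).filter (· ∉ lamBox l)).filter
    fun z => z.1 ∈ Θ

lemma ein_card (l : ℕ) (Θ : Finset Site) : (Ein l Θ).card = 2 * (Ecross l Θ).card := by
  classical
  have h1 : (Ein l Θ).filter (fun z => z.1 ∈ Θ) = Ecross l Θ := by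
    ext z
    simp only [Ein, Ecross, Finset.mem_filter, Finset.mem_sigma]
    tauto
  have h2 : ((Ein l Θ).filter (fun z => z.1 ∉ Θ)).card = (Ecross l Θ).card := by
    refine Finset.card_bij' (fun z _ => (⟨z.2, z.1⟩ : (_ : Site) × Site))
      (fun z _ => (⟨z.2, z.1⟩ : (_ : Site) × Site)) ?_ ?_ (fun _ _ => rfl) (fun _ _ => rfl)
    · rintro ⟨x, y⟩ hz
      simp only [Ein, Finset.mem_filter, Finset.mem_sigma] at hz
      obtain ⟨⟨⟨hx, hy, hyb⟩, hxor⟩, hxn⟩ := hz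
      simp only [Ecross, Finset.mem_filter, Finset.mem_sigma]
      exact ⟨⟨hyb, nbrs_symm hy, hx⟩, by tauto, hxn⟩
    · rintro ⟨x, y⟩ hz
      simp only [Ecross, Finset.mem_filter, Finset.mem_sigma] at hz
      obtain ⟨⟨hx, hy, hyb⟩, hxΘ, hyΘ⟩ := hz
      simp only [Ein, Finset.mem_filter, Finset.mem_sigma]
      exact ⟨⟨⟨hyb, nbrs_symm hy, hx⟩, by tauto⟩, hyΘ⟩
  have h3 := Finset.card_filter_add_card_filter_not
    (s := Ein l Θ) (p := fun z => z.1 ∈ Θ)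
  rw [h1] at h3
  omega

lemma mem_boxBdry {l : ℕ} {e : DBond} (he : e ∈ boxBdry l) :
    ∃ k, lamLo l ≤ k ∧ k ≤ lamHi l ∧
      (e = s((lamHi l, k-1), (lamHi l, k)) ∨ e = s((lamLo l - 1, k-1), (lamLo l - 1, k)) ∨
       e = s((k-1, lamHi l), (k, lamHi l)) ∨ e = s((k-1, lamLo l - 1), (k, lamLo l - 1))) := by
  rw [boxBdry, mem_contourOf] at he
  obtain ⟨x, hx, y, hy, hyn, rfl⟩ := he
  rw [mem_lamBox] at hx
  rcases mem_nbrs.1 hy with rfl | rfl | rfl | rfl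
  · have hx1 : x.1 = lamHi l := by
      rw [mem_lamBox] at hyn; push_neg at hyn; simp at hyn; omega
    refine ⟨x.2, by omega, by omega, Or.inl ?_⟩
    rw [dualBond_r, hx1]
  · have hx1 : x.1 = lamLo l := by
      rw [mem_lamBox] at hyn; push_neg at hyn; simp at hyn; omega
    refine ⟨x.2, by omega, by omega, Or.inr (Or.inl ?_)⟩
    rw [dualBond_l, hx1]
  · have hx2 : x.2 = lamHi l := by
      rw [mem_lamBox] at hyn; push_neg at hyn; simp at hyn; omega
    refine ⟨x.1, by omega, by omega, Or.inr (Or.inr (Or.inl ?_))⟩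
    rw [dualBond_u, hx2]
  · have hx2 : x.2 = lamLo l := by
      rw [mem_lamBox] at hyn; push_neg at hyn; simp at hyn; omega
    refine ⟨x.1, by omega, by omega, Or.inr (Or.inr (Or.inr ?_))⟩
    rw [dualBond_d, hx2]

lemma mem_boxBdry_of {l : ℕ} {x y : Site} (hx : x ∈ lamBox l) (hy : y ∈ nbrs x)
    (hyn : y ∉ lamBox l) : dualBond x y ∈ boxBdry l := by
  rw [boxBdry, mem_contourOf]
  exact ⟨x, hx, y, hy, hyn, rfl⟩

lemma touches_of {l : ℕ} {j : ℤ} {Θ : Finset Site} {x y : Site} (hx : x ∈ Θ)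
    (hy : y ∈ nbrs x) (hyn : y ∉ Θ) {v : Site} (hv : v ∈ dualBond x y)
    (hs : onSide l j v) : touches l j (contourOf Θ) :=
  ⟨dualBond x y, mem_contourOf.2 ⟨x, hx, y, hy, hyn, rfl⟩, v, hv, hs⟩

noncomputable def kOf (e : DBond) : ℤ :=
  Sym2.lift ⟨fun v w => max v.2 w.2, fun _ _ => max_comm _ _⟩ e

noncomputable def mOf (e : DBond) : ℤ :=
  Sym2.lift ⟨fun v w => max v.1 w.1, fun _ _ => max_comm _ _⟩ e

lemma kOf_mk (v w : Site) : kOf s(v, w) = max v.2 w.2 := rfl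

lemma mOf_mk (v w : Site) : mOf s(v, w) = max v.1 w.1 := rfl

noncomputable def minWith (S : Finset ℤ) : ℤ := WithTop.untopD 0 S.min

noncomputable def maxWith (S : Finset ℤ) : ℤ := WithBot.unbotD 0 S.max

lemma minWith_eq {S : Finset ℤ} (h : S.Nonempty) : minWith S = S.min' h := by
  rw [minWith, ← Finset.coe_min' h, WithTop.untopD_coe]

lemma maxWith_eq {S : Finset ℤ} (h : S.Nonempty) : maxWith S = S.max' h := by
  rw [maxWith, ← Finset.coe_max' h, WithBot.unbotD_coe]

lemma minWith_mem {S : Finset ℤ} (h : S.Nonempty) : minWith S ∈ S := by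
  rw [minWith_eq h]; exact S.min'_mem h

lemma maxWith_mem {S : Finset ℤ} (h : S.Nonempty) : maxWith S ∈ S := by
  rw [maxWith_eq h]; exact S.max'_mem h

lemma minWith_le {S : Finset ℤ} {a : ℤ} (ha : a ∈ S) : minWith S ≤ a := by
  rw [minWith_eq ⟨a, ha⟩]; exact S.min'_le a ha

lemma le_maxWith {S : Finset ℤ} {a : ℤ} (ha : a ∈ S) : a ≤ maxWith S := by
  rw [maxWith_eq ⟨a, ha⟩]; exact S.le_max' a ha

lemma eout_le (l : ℕ) (Θ : Finset Site) (hT : ∀ x ∈ Θ, x ∈ lamBox l) :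
    (Eout l Θ).card ≤ (contourOf Θ ∩ boxBdry l).card := by
  classical
  apply Finset.card_le_card_of_injOn (fun z => dualBond z.1 z.2)
  · rintro ⟨x, y⟩ hz
    simp only [Finset.mem_coe, Eout, Finset.mem_filter, Finset.mem_sigma] at hz
    obtain ⟨⟨hx, hy, hyb⟩, hxΘ⟩ := hz
    rw [Finset.mem_coe, Finset.mem_inter]
    exact ⟨mem_contourOf.2 ⟨x, hxΘ, y, hy, fun h => hyb (hT y h), rfl⟩,
      mem_boxBdry_of hx hy hyb⟩
  · rintro ⟨x, y⟩ hz ⟨x', y'⟩ hz' heq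
    simp only [Eout, Finset.mem_filter, Finset.mem_sigma, Finset.coe_filter,
      Set.mem_setOf_eq] at hz hz'
    obtain ⟨⟨hx, hy, hyb⟩, _⟩ := hz
    obtain ⟨⟨hx', hy', hyb'⟩, _⟩ := hz'
    rcases dualBond_inj hy hy' heq with ⟨rfl, rfl⟩ | ⟨h1, h2⟩
    · rfl
    · exact absurd hx (h1 ▸ hyb')

lemma dH_bound (l : ℕ) (σ : Site → ℤ) (ε : ℤ) (ω : Site → ℝ) (Θ : Finset Site)
    (hσ : ∀ x ∈ lamBox l, σ x = 1 ∨ σ x = -1) (hε : ε = 1 ∨ ε = -1)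
    (hω : ∀ y ∈ extBdry l, |ω y| ≤ 1) (hc : IsEContour l σ ε Θ) :
    2 * ((Ecross l Θ).card : ℝ) - 2 * ((Eout l Θ).card : ℝ) ≤ dH l ω [Θ] σ := by
  classical
  have hTsub := theta_subset hc
  have hfold : ([Θ] : List (Finset Site)).foldr flipC σ = flipC Θ σ := rfl
  rw [dH, hfold, Ham, Ham]
  have key : ∀ x ∈ lamBox l, ∀ y ∈ (nbrs x).filter (· ∈ lamBox l),
      ((flipC Θ σ x * flipC Θ σ y : ℤ) : ℝ) - ((σ x * σ y : ℤ) : ℝ)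
        = if (x ∈ Θ ↔ y ∈ Θ) then (0 : ℝ) else 2 := by
    intro x hx y hy
    rw [Finset.mem_filter] at hy
    by_cases hxΘ : x ∈ Θ <;> by_cases hyΘ : y ∈ Θ
    · simp only [flipC, if_pos hxΘ, if_pos hyΘ, neg_mul_neg]
      simp [hxΘ, hyΘ]
    · have hcr := cross_spin hσ hε hc hxΘ hyΘ (nbrs_d1 hy.1)
      have h1 : σ x * σ y = -1 := by
        rcases hε with rfl | rfl <;> rw [hcr.1, hcr.2 hy.2] <;> norm_num
      have h2 : -σ x * σ y = 1 := by rw [neg_mul, h1]; ring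
      simp only [flipC, if_pos hxΘ, if_neg hyΘ]
      rw [h1, h2, if_neg (by tauto)]
      norm_num
    · have hd : d1 y x = 1 := nbrs_d1 (nbrs_symm hy.1)
      have hcr := cross_spin hσ hε hc hyΘ hxΘ hd
      have h1 : σ x * σ y = -1 := by
        rcases hε with rfl | rfl <;> rw [hcr.1, hcr.2 hx] <;> norm_num
      have h2 : σ x * -σ y = 1 := by rw [mul_neg, h1]; ring
      simp only [flipC, if_neg hxΘ, if_pos hyΘ]
      rw [h1, h2, if_neg (by tauto)]
      norm_num
    · simp only [flipC, if_neg hxΘ, if_neg hyΘ]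
      simp [hxΘ, hyΘ]
  have h1 : (∑ x ∈ lamBox l, ∑ y ∈ (nbrs x).filter (· ∈ lamBox l),
        ((flipC Θ σ x * flipC Θ σ y : ℤ) : ℝ))
      - (∑ x ∈ lamBox l, ∑ y ∈ (nbrs x).filter (· ∈ lamBox l), ((σ x * σ y : ℤ) : ℝ))
      = 2 * ((Ein l Θ).card : ℝ) := by
    rw [← Finset.sum_sub_distrib]
    have step1 : ∀ x ∈ lamBox l,
        ((∑ y ∈ (nbrs x).filter (· ∈ lamBox l), ((flipC Θ σ x * flipC Θ σ y : ℤ) : ℝ))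
          - ∑ y ∈ (nbrs x).filter (· ∈ lamBox l), ((σ x * σ y : ℤ) : ℝ))
        = ∑ y ∈ (nbrs x).filter (· ∈ lamBox l), (if (x ∈ Θ ↔ y ∈ Θ) then (0:ℝ) else 2) := by
      intro x hx
      rw [← Finset.sum_sub_distrib]
      exact Finset.sum_congr rfl (fun y hy => key x hx y hy)
    rw [Finset.sum_congr rfl step1, Finset.sum_sigma']
    rw [Finset.sum_ite, Finset.sum_const, Finset.sum_const]
    have hfe : ((lamBox l).sigma fun x => (nbrs x).filter (· ∈ lamBox l)).filter
        (fun z => ¬ (z.1 ∈ Θ ↔ z.2 ∈ Θ)) = Ein l Θ := by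
      rw [Ein]
    rw [hfe]
    simp only [smul_zero, zero_add, nsmul_eq_mul]
    ring
  have h2 : -(2:ℝ) * ((Eout l Θ).card : ℝ) ≤
      (∑ x ∈ lamBox l, ∑ y ∈ (nbrs x).filter (· ∉ lamBox l), ((flipC Θ σ x : ℤ) : ℝ) * ω y)
      - ∑ x ∈ lamBox l, ∑ y ∈ (nbrs x).filter (· ∉ lamBox l), ((σ x : ℤ) : ℝ) * ω y := by
    rw [← Finset.sum_sub_distrib]
    have step1 : ∀ x ∈ lamBox l,
        ∑ y ∈ (nbrs x).filter (· ∉ lamBox l), (if x ∈ Θ then (-2:ℝ) else 0) ≤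
        ((∑ y ∈ (nbrs x).filter (· ∉ lamBox l), ((flipC Θ σ x : ℤ) : ℝ) * ω y)
          - ∑ y ∈ (nbrs x).filter (· ∉ lamBox l), ((σ x : ℤ) : ℝ) * ω y) := by
      intro x hx
      rw [← Finset.sum_sub_distrib]
      apply Finset.sum_le_sum
      intro y hy
      rw [Finset.mem_filter] at hy
      by_cases hxΘ : x ∈ Θ
      · have hyΘ : y ∉ Θ := fun h => hy.2 (hTsub y h)
        have hcr := (cross_spin hσ hε hc hxΘ hyΘ (nbrs_d1 hy.1)).1
        have hωy : |ω y| ≤ 1 := hω y ⟨hy.2, x, hx, nbrs_d1 hy.1⟩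
        rw [abs_le] at hωy
        simp only [flipC, if_pos hxΘ, hcr]
        rcases hε with rfl | rfl <;> push_cast <;> nlinarith [hωy.1, hωy.2]
      · simp [flipC, if_neg hxΘ, hxΘ]
    calc -(2:ℝ) * ((Eout l Θ).card : ℝ)
        = ∑ x ∈ lamBox l, ∑ y ∈ (nbrs x).filter (· ∉ lamBox l),
            (if x ∈ Θ then (-2:ℝ) else 0) := by
          rw [Finset.sum_sigma']
          rw [Finset.sum_ite, Finset.sum_const, Finset.sum_const]
          have hfe : ((lamBox l).sigma fun x => (nbrs x).filter (· ∉ lamBox l)).filter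
              (fun z => z.1 ∈ Θ) = Eout l Θ := by
            rw [Eout]
          rw [hfe]
          simp only [smul_zero, add_zero, nsmul_eq_mul]
          ring
      _ ≤ _ := Finset.sum_le_sum step1
  have hein : ((Ein l Θ).card : ℝ) = 2 * ((Ecross l Θ).card : ℝ) := by
    exact_mod_cast congrArg (fun n : ℕ => (n : ℝ)) (ein_card l Θ)
  linarith

noncomputable def rowS (Θ : Finset Site) (k : ℤ) : Finset ℤ :=
  (Θ.filter (fun p => p.2 = k)).image Prod.fst

noncomputable def colS (Θ : Finset Site) (m : ℤ) : Finset ℤ :=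
  (Θ.filter (fun p => p.1 = m)).image Prod.snd

lemma mem_rowS {Θ : Finset Site} {k m : ℤ} : m ∈ rowS Θ k ↔ ((m, k) : Site) ∈ Θ := by
  constructor
  · intro h
    simp only [rowS, Finset.mem_image, Finset.mem_filter] at h
    obtain ⟨⟨a, b⟩, ⟨h1, h2⟩, h3⟩ := h
    simp at h2 h3; subst h2; subst h3; exact h1
  · intro h
    simp only [rowS, Finset.mem_image, Finset.mem_filter]
    exact ⟨(m, k), ⟨h, rfl⟩, rfl⟩

lemma mem_colS {Θ : Finset Site} {m k : ℤ} : k ∈ colS Θ m ↔ ((m, k) : Site) ∈ Θ := by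
  constructor
  · intro h
    simp only [colS, Finset.mem_image, Finset.mem_filter] at h
    obtain ⟨⟨a, b⟩, ⟨h1, h2⟩, h3⟩ := h
    simp at h2 h3; subst h2; subst h3; exact h1
  · intro h
    simp only [colS, Finset.mem_image, Finset.mem_filter]
    exact ⟨(m, k), ⟨h, rfl⟩, rfl⟩

open Classical in
lemma fsplit (l : ℕ) (Θ : Finset Site) :
    ((Ecross l Θ).filter fun z => z.1.1 = z.2.1).card
      + ((Ecross l Θ).filter fun z => z.1.2 = z.2.2).card ≤ (Ecross l Θ).card := by
  classical
  have hdisj : Disjoint ((Ecross l Θ).filter fun z => z.1.1 = z.2.1)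
      ((Ecross l Θ).filter fun z => z.1.2 = z.2.2) := by
    rw [Finset.disjoint_left]
    rintro ⟨x, y⟩ h1 h2
    simp only [Finset.mem_filter, Ecross, Finset.mem_sigma] at h1 h2
    exact nbrs_ne h1.1.1.2.1 (Prod.ext h1.2 h2.2).symm
  rw [← Finset.card_union_of_disjoint hdisj]
  exact Finset.card_le_card (Finset.union_subset (Finset.filter_subset _ _)
    (Finset.filter_subset _ _))

open Classical in
lemma count_side1 (l : ℕ) (Θ : Finset Site) (hT : ∀ x ∈ Θ, x ∈ lamBox l)
    (ht2 : ¬ touches l 2 (contourOf Θ)) (htm2 : ¬ touches l (-2) (contourOf Θ))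
    (htm1 : ¬ touches l (-1) (contourOf Θ)) :
    horizCount (contourOf Θ) + ((contourOf Θ) ∩ boxBdry l).card ≤ (Ecross l Θ).card := by
  classical
  have hA : horizCount (contourOf Θ) ≤
      ((Ecross l Θ).filter fun z => z.1.1 = z.2.1).card := by
    rw [horizCount]
    apply Finset.card_le_card_of_surjOn (fun z => dualBond z.1 z.2)
    intro e he
    simp only [Finset.coe_filter, Set.mem_setOf_eq] at he
    obtain ⟨heγ, hhor⟩ := he
    obtain ⟨x, hxΘ, y, hy, hyn, he2⟩ := mem_contourOf.1 heγ
    have hxb := hT x hxΘ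
    have hvert : ∀ c k : ℤ, e ≠ s((c, k - 1), (c, k)) := by
      intro c k hek
      obtain ⟨v, w, hvw, hvw2⟩ := hhor
      rw [hvw, Sym2.eq_iff] at hek
      simp only [Prod.ext_iff] at hek
      omega
    rcases mem_nbrs.1 hy with rfl | rfl | rfl | rfl
    · exact absurd (he2.trans (dualBond_r x)) (hvert x.1 x.2)
    · exact absurd (he2.trans (dualBond_l x)) (hvert (x.1 - 1) x.2)
    · have hyb : (x.1, x.2 + 1) ∈ lamBox l := by
        by_contra hyb
        apply ht2
        refine touches_of hxΘ hy hyn (v := (x.1, x.2)) ?_ ?_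
        · rw [dualBond_u]; exact Sym2.mem_mk_right _ _
        · rw [mem_lamBox] at hxb hyb
          right; right; left
          refine ⟨rfl, by simp at hyb ⊢; omega, by simp; omega, by simp; omega⟩
      refine ⟨⟨x, (x.1, x.2 + 1)⟩, ?_, he2.symm⟩
      simp only [Finset.coe_filter, Set.mem_setOf_eq, Ecross, Finset.mem_filter,
        Finset.mem_sigma]
      exact ⟨⟨⟨hxb, hy, hyb⟩, hxΘ, hyn⟩, trivial⟩
    · have hyb : (x.1, x.2 - 1) ∈ lamBox l := by
        by_contra hyb
        apply htm2
        refine touches_of hxΘ hy hyn (v := (x.1, x.2 - 1)) ?_ ?_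
        · rw [dualBond_d]; exact Sym2.mem_mk_right _ _
        · rw [mem_lamBox] at hxb hyb
          right; right; right
          refine ⟨rfl, by simp at hyb ⊢; omega, by simp; omega, by simp; omega⟩
      refine ⟨⟨x, (x.1, x.2 - 1)⟩, ?_, he2.symm⟩
      simp only [Finset.coe_filter, Set.mem_setOf_eq, Ecross, Finset.mem_filter,
        Finset.mem_sigma]
      exact ⟨⟨⟨hxb, hy, hyb⟩, hxΘ, hyn⟩, trivial⟩
  have hLo : ∀ k, lamLo l ≤ k → k ≤ lamHi l → ((lamLo l, k) : Site) ∉ Θ := by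
    intro k hk1 hk2 hmem
    apply htm1
    refine touches_of hmem (y := (lamLo l - 1, k)) ?_ ?_ (v := (lamLo l - 1, k)) ?_ ?_
    · exact mem_nbrs.2 (Or.inr (Or.inl rfl))
    · intro h
      have := hT _ h; rw [mem_lamBox] at this; simp at this <;> omega
    · rw [show ((lamLo l - 1, k) : Site) = (((lamLo l, k) : Site).1 - 1,
        ((lamLo l, k) : Site).2) from rfl, dualBond_l]
      exact Sym2.mem_mk_right _ _
    · right; left; exact ⟨rfl, rfl, by omega, by omega⟩
  have hform : ∀ e ∈ contourOf Θ ∩ boxBdry l, ∃ k, lamLo l ≤ k ∧ k ≤ lamHi l ∧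
      e = s((lamHi l, k-1), (lamHi l, k)) ∧ ((lamHi l, k) : Site) ∈ Θ := by
    intro e he
    rw [Finset.mem_inter] at he
    obtain ⟨k, hk1, hk2, hcase⟩ := mem_boxBdry he.2
    obtain ⟨x, hxΘ, y, hy, hyn, he2⟩ := mem_contourOf.1 he.1
    rcases hcase with h | h | h | h
    · have hd : e = dualBond ((lamHi l, k) : Site) ((lamHi l + 1, k) : Site) := by
        rw [h, show ((lamHi l + 1, k) : Site) = (((lamHi l, k) : Site).1 + 1,
          ((lamHi l, k) : Site).2) from rfl, dualBond_r]
      have hnb : ((lamHi l + 1, k) : Site) ∈ nbrs ((lamHi l, k) : Site) :=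
        mem_nbrs.2 (Or.inl rfl)
      rcases dualBond_inj hy hnb (he2.symm.trans hd) with ⟨hx', hy'⟩ | ⟨hx', hy'⟩
      · exact ⟨k, hk1, hk2, h, hx' ▸ hxΘ⟩
      · exfalso
        have := hT x hxΘ
        rw [hx', mem_lamBox] at this
        simp at this <;> omega
    · exfalso
      exact htm1 ⟨e, he.1, (lamLo l - 1, k), by rw [h]; exact Sym2.mem_mk_right _ _,
        Or.inr (Or.inl ⟨rfl, rfl, by omega, by omega⟩)⟩
    · exfalso
      exact ht2 ⟨e, he.1, (k, lamHi l), by rw [h]; exact Sym2.mem_mk_right _ _,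
        Or.inr (Or.inr (Or.inl ⟨rfl, rfl, by omega, by omega⟩))⟩
    · exfalso
      exact htm2 ⟨e, he.1, (k, lamLo l - 1), by rw [h]; exact Sym2.mem_mk_right _ _,
        Or.inr (Or.inr (Or.inr ⟨rfl, rfl, by omega, by omega⟩))⟩
  have hB : ((contourOf Θ) ∩ boxBdry l).card ≤
      ((Ecross l Θ).filter fun z => z.1.2 = z.2.2).card := by
    apply Finset.card_le_card_of_injOn
      (fun e => (⟨(minWith (rowS Θ (kOf e)), kOf e),
        (minWith (rowS Θ (kOf e)) - 1, kOf e)⟩ : (_ : Site) × Site))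
    · intro e he
      have he' : e ∈ contourOf Θ ∩ boxBdry l := he
      obtain ⟨k, hk1, hk2, hef, hkΘ⟩ := hform e he'
      have hkOf : kOf e = k := by
        rw [hef, kOf_mk]; simp <;> omega
      refine Finset.mem_coe.2 (Finset.mem_filter.2 ?_)
      simp only [hkOf]
      set m := minWith (rowS Θ k) with hm
      have hmem : lamHi l ∈ rowS Θ k := mem_rowS.2 hkΘ
      have hmΘ : ((m, k) : Site) ∈ Θ := mem_rowS.1 (minWith_mem ⟨_, hmem⟩)
      have hmle : m ≤ lamHi l := minWith_le hmem
      have hbox := hT _ hmΘ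
      rw [mem_lamBox] at hbox
      simp only at hbox
      have hmne : m ≠ lamLo l := fun h => hLo k hk1 hk2 (h ▸ hmΘ)
      have hm0 : ((m - 1, k) : Site) ∉ Θ := fun h => by
        have := minWith_le (mem_rowS.2 h); omega
      constructor
      · simp only [Ecross, Finset.mem_filter, Finset.mem_sigma]
        refine ⟨⟨?_, ?_, ?_⟩, hmΘ, hm0⟩
        · rw [mem_lamBox]; simp <;> omega
        · exact mem_nbrs.2 (Or.inr (Or.inl rfl))
        · rw [mem_lamBox]; simp <;> omega
      · trivial
    · intro e he e' he' heq
      have hee : e ∈ contourOf Θ ∩ boxBdry l := he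
      have hee' : e' ∈ contourOf Θ ∩ boxBdry l := he'
      obtain ⟨k, hk1, hk2, hef, hkΘ⟩ := hform e hee
      obtain ⟨k', hk1', hk2', hef', hkΘ'⟩ := hform e' hee'
      have hkOf : kOf e = k := by rw [hef, kOf_mk]; simp <;> omega
      have hkOf' : kOf e' = k' := by rw [hef', kOf_mk]; simp <;> omega
      have hkk : k = k' := by
        have := congrArg (fun z : (_ : Site) × Site => z.1.2) heq
        simpa [hkOf, hkOf'] using this
      rw [hef, hef', hkk]
  have := fsplit l Θ
  omega

open Classical in
lemma count_sideN1 (l : ℕ) (Θ : Finset Site) (hT : ∀ x ∈ Θ, x ∈ lamBox l)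
    (ht2 : ¬ touches l 2 (contourOf Θ)) (htm2 : ¬ touches l (-2) (contourOf Θ))
    (ht1 : ¬ touches l 1 (contourOf Θ)) :
    horizCount (contourOf Θ) + ((contourOf Θ) ∩ boxBdry l).card ≤ (Ecross l Θ).card := by
  classical
  have hA : horizCount (contourOf Θ) ≤
      ((Ecross l Θ).filter fun z => z.1.1 = z.2.1).card := by
    rw [horizCount]
    apply Finset.card_le_card_of_surjOn (fun z => dualBond z.1 z.2)
    intro e he
    simp only [Finset.coe_filter, Set.mem_setOf_eq] at he
    obtain ⟨heγ, hhor⟩ := he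
    obtain ⟨x, hxΘ, y, hy, hyn, he2⟩ := mem_contourOf.1 heγ
    have hxb := hT x hxΘ
    have hvert : ∀ c k : ℤ, e ≠ s((c, k - 1), (c, k)) := by
      intro c k hek
      obtain ⟨v, w, hvw, hvw2⟩ := hhor
      rw [hvw, Sym2.eq_iff] at hek
      simp only [Prod.ext_iff] at hek
      omega
    rcases mem_nbrs.1 hy with rfl | rfl | rfl | rfl
    · exact absurd (he2.trans (dualBond_r x)) (hvert x.1 x.2)
    · exact absurd (he2.trans (dualBond_l x)) (hvert (x.1 - 1) x.2)
    · have hyb : (x.1, x.2 + 1) ∈ lamBox l := by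
        by_contra hyb
        apply ht2
        refine touches_of hxΘ hy hyn (v := (x.1, x.2)) ?_ ?_
        · rw [dualBond_u]; exact Sym2.mem_mk_right _ _
        · rw [mem_lamBox] at hxb hyb
          right; right; left
          refine ⟨rfl, by simp at hyb ⊢; omega, by simp; omega, by simp; omega⟩
      refine ⟨⟨x, (x.1, x.2 + 1)⟩, ?_, he2.symm⟩
      simp only [Finset.coe_filter, Set.mem_setOf_eq, Ecross, Finset.mem_filter,
        Finset.mem_sigma]
      exact ⟨⟨⟨hxb, hy, hyb⟩, hxΘ, hyn⟩, trivial⟩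
    · have hyb : (x.1, x.2 - 1) ∈ lamBox l := by
        by_contra hyb
        apply htm2
        refine touches_of hxΘ hy hyn (v := (x.1, x.2 - 1)) ?_ ?_
        · rw [dualBond_d]; exact Sym2.mem_mk_right _ _
        · rw [mem_lamBox] at hxb hyb
          right; right; right
          refine ⟨rfl, by simp at hyb ⊢; omega, by simp; omega, by simp; omega⟩
      refine ⟨⟨x, (x.1, x.2 - 1)⟩, ?_, he2.symm⟩
      simp only [Finset.coe_filter, Set.mem_setOf_eq, Ecross, Finset.mem_filter,
        Finset.mem_sigma]
      exact ⟨⟨⟨hxb, hy, hyb⟩, hxΘ, hyn⟩, trivial⟩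
  have hHi : ∀ k, lamLo l ≤ k → k ≤ lamHi l → ((lamHi l, k) : Site) ∉ Θ := by
    intro k hk1 hk2 hmem
    apply ht1
    refine touches_of hmem (y := (lamHi l + 1, k)) ?_ ?_ (v := (lamHi l, k)) ?_ ?_
    · exact mem_nbrs.2 (Or.inl rfl)
    · intro h
      have := hT _ h; rw [mem_lamBox] at this; simp at this <;> omega
    · rw [show ((lamHi l + 1, k) : Site) = (((lamHi l, k) : Site).1 + 1,
        ((lamHi l, k) : Site).2) from rfl, dualBond_r]
      exact Sym2.mem_mk_right _ _
    · left; exact ⟨rfl, rfl, by omega, by omega⟩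
  have hform : ∀ e ∈ contourOf Θ ∩ boxBdry l, ∃ k, lamLo l ≤ k ∧ k ≤ lamHi l ∧
      e = s((lamLo l - 1, k-1), (lamLo l - 1, k)) ∧ ((lamLo l, k) : Site) ∈ Θ := by
    intro e he
    rw [Finset.mem_inter] at he
    obtain ⟨k, hk1, hk2, hcase⟩ := mem_boxBdry he.2
    obtain ⟨x, hxΘ, y, hy, hyn, he2⟩ := mem_contourOf.1 he.1
    rcases hcase with h | h | h | h
    · exfalso
      exact ht1 ⟨e, he.1, (lamHi l, k), by rw [h]; exact Sym2.mem_mk_right _ _,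
        Or.inl ⟨rfl, rfl, by omega, by omega⟩⟩
    · have hd : e = dualBond ((lamLo l - 1, k) : Site) ((lamLo l, k) : Site) := by
        rw [h, show ((lamLo l, k) : Site) = (((lamLo l - 1, k) : Site).1 + 1,
          ((lamLo l - 1, k) : Site).2) from by simp, dualBond_r]
      have hnb : ((lamLo l, k) : Site) ∈ nbrs ((lamLo l - 1, k) : Site) :=
        mem_nbrs.2 (Or.inl (by simp))
      rcases dualBond_inj hy hnb (he2.symm.trans hd) with ⟨hx', hy'⟩ | ⟨hx', hy'⟩
      · exfalso
        have := hT x hxΘ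
        rw [hx', mem_lamBox] at this
        simp at this <;> omega
      · exact ⟨k, hk1, hk2, h, hx' ▸ hxΘ⟩
    · exfalso
      exact ht2 ⟨e, he.1, (k, lamHi l), by rw [h]; exact Sym2.mem_mk_right _ _,
        Or.inr (Or.inr (Or.inl ⟨rfl, rfl, by omega, by omega⟩))⟩
    · exfalso
      exact htm2 ⟨e, he.1, (k, lamLo l - 1), by rw [h]; exact Sym2.mem_mk_right _ _,
        Or.inr (Or.inr (Or.inr ⟨rfl, rfl, by omega, by omega⟩))⟩
  have hB : ((contourOf Θ) ∩ boxBdry l).card ≤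
      ((Ecross l Θ).filter fun z => z.1.2 = z.2.2).card := by
    apply Finset.card_le_card_of_injOn
      (fun e => (⟨(maxWith (rowS Θ (kOf e)), kOf e),
        (maxWith (rowS Θ (kOf e)) + 1, kOf e)⟩ : (_ : Site) × Site))
    · intro e he
      have he' : e ∈ contourOf Θ ∩ boxBdry l := he
      obtain ⟨k, hk1, hk2, hef, hkΘ⟩ := hform e he'
      have hkOf : kOf e = k := by
        rw [hef, kOf_mk]; simp <;> omega
      refine Finset.mem_coe.2 (Finset.mem_filter.2 ?_)
      simp only [hkOf]
      set m := maxWith (rowS Θ k) with hm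
      have hmem : lamLo l ∈ rowS Θ k := mem_rowS.2 hkΘ
      have hmΘ : ((m, k) : Site) ∈ Θ := mem_rowS.1 (maxWith_mem ⟨_, hmem⟩)
      have hmle : lamLo l ≤ m := le_maxWith hmem
      have hbox := hT _ hmΘ
      rw [mem_lamBox] at hbox
      simp only at hbox
      have hmne : m ≠ lamHi l := fun h => hHi k hk1 hk2 (h ▸ hmΘ)
      have hm0 : ((m + 1, k) : Site) ∉ Θ := fun h => by
        have := le_maxWith (mem_rowS.2 h); omega
      constructor
      · simp only [Ecross, Finset.mem_filter, Finset.mem_sigma]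
        refine ⟨⟨?_, ?_, ?_⟩, hmΘ, hm0⟩
        · rw [mem_lamBox]; simp <;> omega
        · exact mem_nbrs.2 (Or.inl rfl)
        · rw [mem_lamBox]; simp <;> omega
      · trivial
    · intro e he e' he' heq
      have hee : e ∈ contourOf Θ ∩ boxBdry l := he
      have hee' : e' ∈ contourOf Θ ∩ boxBdry l := he'
      obtain ⟨k, hk1, hk2, hef, hkΘ⟩ := hform e hee
      obtain ⟨k', hk1', hk2', hef', hkΘ'⟩ := hform e' hee'
      have hkOf : kOf e = k := by rw [hef, kOf_mk]; simp <;> omega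
      have hkOf' : kOf e' = k' := by rw [hef', kOf_mk]; simp <;> omega
      have hkk : k = k' := by
        have := congrArg (fun z : (_ : Site) × Site => z.1.2) heq
        simpa [hkOf, hkOf'] using this
      rw [hef, hef', hkk]
  have := fsplit l Θ
  omega

open Classical in
lemma count_side2 (l : ℕ) (Θ : Finset Site) (hT : ∀ x ∈ Θ, x ∈ lamBox l)
    (ht1 : ¬ touches l 1 (contourOf Θ)) (htm1 : ¬ touches l (-1) (contourOf Θ))
    (htm2 : ¬ touches l (-2) (contourOf Θ)) :
    vertCount (contourOf Θ) + ((contourOf Θ) ∩ boxBdry l).card ≤ (Ecross l Θ).card := by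
  classical
  have hA : vertCount (contourOf Θ) ≤
      ((Ecross l Θ).filter fun z => z.1.2 = z.2.2).card := by
    rw [vertCount]
    apply Finset.card_le_card_of_surjOn (fun z => dualBond z.1 z.2)
    intro e he
    simp only [Finset.coe_filter, Set.mem_setOf_eq] at he
    obtain ⟨heγ, hver⟩ := he
    obtain ⟨x, hxΘ, y, hy, hyn, he2⟩ := mem_contourOf.1 heγ
    have hxb := hT x hxΘ
    have hhor : ∀ c k : ℤ, e ≠ s((c - 1, k), (c, k)) := by
      intro c k hek
      obtain ⟨v, w, hvw, hvw2⟩ := hver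
      rw [hvw, Sym2.eq_iff] at hek
      simp only [Prod.ext_iff] at hek
      omega
    rcases mem_nbrs.1 hy with rfl | rfl | rfl | rfl
    · have hyb : (x.1 + 1, x.2) ∈ lamBox l := by
        by_contra hyb
        apply ht1
        refine touches_of hxΘ hy hyn (v := (x.1, x.2)) ?_ ?_
        · rw [dualBond_r]; exact Sym2.mem_mk_right _ _
        · rw [mem_lamBox] at hxb hyb
          left
          refine ⟨rfl, by simp at hyb ⊢; omega, by simp; omega, by simp; omega⟩
      refine ⟨⟨x, (x.1 + 1, x.2)⟩, ?_, he2.symm⟩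
      simp only [Finset.coe_filter, Set.mem_setOf_eq, Ecross, Finset.mem_filter,
        Finset.mem_sigma]
      exact ⟨⟨⟨hxb, hy, hyb⟩, hxΘ, hyn⟩, trivial⟩
    · have hyb : (x.1 - 1, x.2) ∈ lamBox l := by
        by_contra hyb
        apply htm1
        refine touches_of hxΘ hy hyn (v := (x.1 - 1, x.2)) ?_ ?_
        · rw [dualBond_l]; exact Sym2.mem_mk_right _ _
        · rw [mem_lamBox] at hxb hyb
          right; left
          refine ⟨rfl, by simp at hyb ⊢; omega, by simp; omega, by simp; omega⟩
      refine ⟨⟨x, (x.1 - 1, x.2)⟩, ?_, he2.symm⟩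
      simp only [Finset.coe_filter, Set.mem_setOf_eq, Ecross, Finset.mem_filter,
        Finset.mem_sigma]
      exact ⟨⟨⟨hxb, hy, hyb⟩, hxΘ, hyn⟩, trivial⟩
    · exact absurd (he2.trans (dualBond_u x)) (hhor x.1 x.2)
    · exact absurd (he2.trans (dualBond_d x)) (hhor x.1 (x.2 - 1))
  have hLo : ∀ m, lamLo l ≤ m → m ≤ lamHi l → ((m, lamLo l) : Site) ∉ Θ := by
    intro m hm1 hm2 hmem
    apply htm2
    refine touches_of hmem (y := (m, lamLo l - 1)) ?_ ?_ (v := (m, lamLo l - 1)) ?_ ?_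
    · exact mem_nbrs.2 (Or.inr (Or.inr (Or.inr rfl)))
    · intro h
      have := hT _ h; rw [mem_lamBox] at this; simp at this <;> omega
    · rw [show ((m, lamLo l - 1) : Site) = (((m, lamLo l) : Site).1,
        ((m, lamLo l) : Site).2 - 1) from rfl, dualBond_d]
      exact Sym2.mem_mk_right _ _
    · right; right; right; exact ⟨rfl, rfl, by omega, by omega⟩
  have hform : ∀ e ∈ contourOf Θ ∩ boxBdry l, ∃ m, lamLo l ≤ m ∧ m ≤ lamHi l ∧
      e = s((m-1, lamHi l), (m, lamHi l)) ∧ ((m, lamHi l) : Site) ∈ Θ := by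
    intro e he
    rw [Finset.mem_inter] at he
    obtain ⟨k, hk1, hk2, hcase⟩ := mem_boxBdry he.2
    obtain ⟨x, hxΘ, y, hy, hyn, he2⟩ := mem_contourOf.1 he.1
    rcases hcase with h | h | h | h
    · exfalso
      exact ht1 ⟨e, he.1, (lamHi l, k), by rw [h]; exact Sym2.mem_mk_right _ _,
        Or.inl ⟨rfl, rfl, by omega, by omega⟩⟩
    · exfalso
      exact htm1 ⟨e, he.1, (lamLo l - 1, k), by rw [h]; exact Sym2.mem_mk_right _ _,
        Or.inr (Or.inl ⟨rfl, rfl, by omega, by omega⟩)⟩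
    · have hd : e = dualBond ((k, lamHi l) : Site) ((k, lamHi l + 1) : Site) := by
        rw [h, show ((k, lamHi l + 1) : Site) = (((k, lamHi l) : Site).1,
          ((k, lamHi l) : Site).2 + 1) from rfl, dualBond_u]
      have hnb : ((k, lamHi l + 1) : Site) ∈ nbrs ((k, lamHi l) : Site) :=
        mem_nbrs.2 (Or.inr (Or.inr (Or.inl rfl)))
      rcases dualBond_inj hy hnb (he2.symm.trans hd) with ⟨hx', hy'⟩ | ⟨hx', hy'⟩
      · exact ⟨k, hk1, hk2, h, hx' ▸ hxΘ⟩
      · exfalso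
        have := hT x hxΘ
        rw [hx', mem_lamBox] at this
        simp at this <;> omega
    · exfalso
      exact htm2 ⟨e, he.1, (k, lamLo l - 1), by rw [h]; exact Sym2.mem_mk_right _ _,
        Or.inr (Or.inr (Or.inr ⟨rfl, rfl, by omega, by omega⟩))⟩
  have hB : ((contourOf Θ) ∩ boxBdry l).card ≤
      ((Ecross l Θ).filter fun z => z.1.1 = z.2.1).card := by
    apply Finset.card_le_card_of_injOn
      (fun e => (⟨(mOf e, minWith (colS Θ (mOf e))),
        (mOf e, minWith (colS Θ (mOf e)) - 1)⟩ : (_ : Site) × Site))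
    · intro e he
      have he' : e ∈ contourOf Θ ∩ boxBdry l := he
      obtain ⟨m, hm1, hm2, hef, hmΘ'⟩ := hform e he'
      have hmOf : mOf e = m := by
        rw [hef, mOf_mk]; simp <;> omega
      refine Finset.mem_coe.2 (Finset.mem_filter.2 ?_)
      simp only [hmOf]
      set k := minWith (colS Θ m) with hk
      have hmem : lamHi l ∈ colS Θ m := mem_colS.2 hmΘ'
      have hkΘ : ((m, k) : Site) ∈ Θ := mem_colS.1 (minWith_mem ⟨_, hmem⟩)
      have hkle : k ≤ lamHi l := minWith_le hmem
      have hbox := hT _ hkΘ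
      rw [mem_lamBox] at hbox
      simp only at hbox
      have hkne : k ≠ lamLo l := fun h => hLo m hm1 hm2 (h ▸ hkΘ)
      have hk0 : ((m, k - 1) : Site) ∉ Θ := fun h => by
        have := minWith_le (mem_colS.2 h); omega
      constructor
      · simp only [Ecross, Finset.mem_filter, Finset.mem_sigma]
        refine ⟨⟨?_, ?_, ?_⟩, hkΘ, hk0⟩
        · rw [mem_lamBox]; simp <;> omega
        · exact mem_nbrs.2 (Or.inr (Or.inr (Or.inr rfl)))
        · rw [mem_lamBox]; simp <;> omega
      · trivial
    · intro e he e' he' heq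
      have hee : e ∈ contourOf Θ ∩ boxBdry l := he
      have hee' : e' ∈ contourOf Θ ∩ boxBdry l := he'
      obtain ⟨m, hm1, hm2, hef, hmΘ⟩ := hform e hee
      obtain ⟨m', hm1', hm2', hef', hmΘ'⟩ := hform e' hee'
      have hmOf : mOf e = m := by rw [hef, mOf_mk]; simp <;> omega
      have hmOf' : mOf e' = m' := by rw [hef', mOf_mk]; simp <;> omega
      have hmm : m = m' := by
        have := congrArg (fun z : (_ : Site) × Site => z.1.1) heq
        simpa [hmOf, hmOf'] using this
      rw [hef, hef', hmm]
  have := fsplit l Θ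
  omega

open Classical in
lemma count_sideN2 (l : ℕ) (Θ : Finset Site) (hT : ∀ x ∈ Θ, x ∈ lamBox l)
    (ht1 : ¬ touches l 1 (contourOf Θ)) (htm1 : ¬ touches l (-1) (contourOf Θ))
    (ht2 : ¬ touches l 2 (contourOf Θ)) :
    vertCount (contourOf Θ) + ((contourOf Θ) ∩ boxBdry l).card ≤ (Ecross l Θ).card := by
  classical
  have hA : vertCount (contourOf Θ) ≤
      ((Ecross l Θ).filter fun z => z.1.2 = z.2.2).card := by
    rw [vertCount]
    apply Finset.card_le_card_of_surjOn (fun z => dualBond z.1 z.2)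
    intro e he
    simp only [Finset.coe_filter, Set.mem_setOf_eq] at he
    obtain ⟨heγ, hver⟩ := he
    obtain ⟨x, hxΘ, y, hy, hyn, he2⟩ := mem_contourOf.1 heγ
    have hxb := hT x hxΘ
    have hhor : ∀ c k : ℤ, e ≠ s((c - 1, k), (c, k)) := by
      intro c k hek
      obtain ⟨v, w, hvw, hvw2⟩ := hver
      rw [hvw, Sym2.eq_iff] at hek
      simp only [Prod.ext_iff] at hek
      omega
    rcases mem_nbrs.1 hy with rfl | rfl | rfl | rfl
    · have hyb : (x.1 + 1, x.2) ∈ lamBox l := by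
        by_contra hyb
        apply ht1
        refine touches_of hxΘ hy hyn (v := (x.1, x.2)) ?_ ?_
        · rw [dualBond_r]; exact Sym2.mem_mk_right _ _
        · rw [mem_lamBox] at hxb hyb
          left
          refine ⟨rfl, by simp at hyb ⊢; omega, by simp; omega, by simp; omega⟩
      refine ⟨⟨x, (x.1 + 1, x.2)⟩, ?_, he2.symm⟩
      simp only [Finset.coe_filter, Set.mem_setOf_eq, Ecross, Finset.mem_filter,
        Finset.mem_sigma]
      exact ⟨⟨⟨hxb, hy, hyb⟩, hxΘ, hyn⟩, trivial⟩
    · have hyb : (x.1 - 1, x.2) ∈ lamBox l := by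
        by_contra hyb
        apply htm1
        refine touches_of hxΘ hy hyn (v := (x.1 - 1, x.2)) ?_ ?_
        · rw [dualBond_l]; exact Sym2.mem_mk_right _ _
        · rw [mem_lamBox] at hxb hyb
          right; left
          refine ⟨rfl, by simp at hyb ⊢; omega, by simp; omega, by simp; omega⟩
      refine ⟨⟨x, (x.1 - 1, x.2)⟩, ?_, he2.symm⟩
      simp only [Finset.coe_filter, Set.mem_setOf_eq, Ecross, Finset.mem_filter,
        Finset.mem_sigma]
      exact ⟨⟨⟨hxb, hy, hyb⟩, hxΘ, hyn⟩, trivial⟩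
    · exact absurd (he2.trans (dualBond_u x)) (hhor x.1 x.2)
    · exact absurd (he2.trans (dualBond_d x)) (hhor x.1 (x.2 - 1))
  have hHi : ∀ m, lamLo l ≤ m → m ≤ lamHi l → ((m, lamHi l) : Site) ∉ Θ := by
    intro m hm1 hm2 hmem
    apply ht2
    refine touches_of hmem (y := (m, lamHi l + 1)) ?_ ?_ (v := (m, lamHi l)) ?_ ?_
    · exact mem_nbrs.2 (Or.inr (Or.inr (Or.inl rfl)))
    · intro h
      have := hT _ h; rw [mem_lamBox] at this; simp at this <;> omega
    · rw [show ((m, lamHi l + 1) : Site) = (((m, lamHi l) : Site).1,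
        ((m, lamHi l) : Site).2 + 1) from rfl, dualBond_u]
      exact Sym2.mem_mk_right _ _
    · right; right; left; exact ⟨rfl, rfl, by omega, by omega⟩
  have hform : ∀ e ∈ contourOf Θ ∩ boxBdry l, ∃ m, lamLo l ≤ m ∧ m ≤ lamHi l ∧
      e = s((m-1, lamLo l - 1), (m, lamLo l - 1)) ∧ ((m, lamLo l) : Site) ∈ Θ := by
    intro e he
    rw [Finset.mem_inter] at he
    obtain ⟨k, hk1, hk2, hcase⟩ := mem_boxBdry he.2
    obtain ⟨x, hxΘ, y, hy, hyn, he2⟩ := mem_contourOf.1 he.1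
    rcases hcase with h | h | h | h
    · exfalso
      exact ht1 ⟨e, he.1, (lamHi l, k), by rw [h]; exact Sym2.mem_mk_right _ _,
        Or.inl ⟨rfl, rfl, by omega, by omega⟩⟩
    · exfalso
      exact htm1 ⟨e, he.1, (lamLo l - 1, k), by rw [h]; exact Sym2.mem_mk_right _ _,
        Or.inr (Or.inl ⟨rfl, rfl, by omega, by omega⟩)⟩
    · exfalso
      exact ht2 ⟨e, he.1, (k, lamHi l), by rw [h]; exact Sym2.mem_mk_right _ _,
        Or.inr (Or.inr (Or.inl ⟨rfl, rfl, by omega, by omega⟩))⟩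
    · have hd : e = dualBond ((k, lamLo l - 1) : Site) ((k, lamLo l) : Site) := by
        rw [h, show ((k, lamLo l) : Site) = (((k, lamLo l - 1) : Site).1,
          ((k, lamLo l - 1) : Site).2 + 1) from by simp, dualBond_u]
      have hnb : ((k, lamLo l) : Site) ∈ nbrs ((k, lamLo l - 1) : Site) :=
        mem_nbrs.2 (Or.inr (Or.inr (Or.inl (by simp))))
      rcases dualBond_inj hy hnb (he2.symm.trans hd) with ⟨hx', hy'⟩ | ⟨hx', hy'⟩
      · exfalso
        have := hT x hxΘ
        rw [hx', mem_lamBox] at this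
        simp at this <;> omega
      · exact ⟨k, hk1, hk2, h, hx' ▸ hxΘ⟩
  have hB : ((contourOf Θ) ∩ boxBdry l).card ≤
      ((Ecross l Θ).filter fun z => z.1.1 = z.2.1).card := by
    apply Finset.card_le_card_of_injOn
      (fun e => (⟨(mOf e, maxWith (colS Θ (mOf e))),
        (mOf e, maxWith (colS Θ (mOf e)) + 1)⟩ : (_ : Site) × Site))
    · intro e he
      have he' : e ∈ contourOf Θ ∩ boxBdry l := he
      obtain ⟨m, hm1, hm2, hef, hmΘ'⟩ := hform e he'
      have hmOf : mOf e = m := by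
        rw [hef, mOf_mk]; simp <;> omega
      refine Finset.mem_coe.2 (Finset.mem_filter.2 ?_)
      simp only [hmOf]
      set k := maxWith (colS Θ m) with hk
      have hmem : lamLo l ∈ colS Θ m := mem_colS.2 hmΘ'
      have hkΘ : ((m, k) : Site) ∈ Θ := mem_colS.1 (maxWith_mem ⟨_, hmem⟩)
      have hkle : lamLo l ≤ k := le_maxWith hmem
      have hbox := hT _ hkΘ
      rw [mem_lamBox] at hbox
      simp only at hbox
      have hkne : k ≠ lamHi l := fun h => hHi m hm1 hm2 (h ▸ hkΘ)
      have hk0 : ((m, k + 1) : Site) ∉ Θ := fun h => by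
        have := le_maxWith (mem_colS.2 h); omega
      constructor
      · simp only [Ecross, Finset.mem_filter, Finset.mem_sigma]
        refine ⟨⟨?_, ?_, ?_⟩, hkΘ, hk0⟩
        · rw [mem_lamBox]; simp <;> omega
        · exact mem_nbrs.2 (Or.inr (Or.inr (Or.inl rfl)))
        · rw [mem_lamBox]; simp <;> omega
      · trivial
    · intro e he e' he' heq
      have hee : e ∈ contourOf Θ ∩ boxBdry l := he
      have hee' : e' ∈ contourOf Θ ∩ boxBdry l := he'
      obtain ⟨m, hm1, hm2, hef, hmΘ⟩ := hform e hee
      obtain ⟨m', hm1', hm2', hef', hmΘ'⟩ := hform e' hee'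
      have hmOf : mOf e = m := by rw [hef, mOf_mk]; simp <;> omega
      have hmOf' : mOf e' = m' := by rw [hef', mOf_mk]; simp <;> omega
      have hmm : m = m' := by
        have := congrArg (fun z : (_ : Site) × Site => z.1.1) heq
        simpa [hmOf, hmOf'] using this
      rw [hef, hef', hmm]
  have := fsplit l Θ
  omega

end Aux

/-- If an (ε)-contour `γ` at `σ` in `Λ(l)` meets exactly one of the four
sides `F_l^j` of `Q(Λ(l))`, then `Δ_γ H^ω(σ)` is at least the number of horizontal dual
bonds of `γ` if `j = ±1`, and at least the number of vertical dual bonds if `j = ±2`. -/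
theorem stmt9 (l : ℕ) (σ : Site → ℤ) (hσ : ∀ x ∈ lamBox l, σ x = 1 ∨ σ x = -1)
    (ε : ℤ) (hε : ε = 1 ∨ ε = -1) (ω : Site → ℝ)
    (hω : ∀ y ∈ extBdry l, |ω y| ≤ 1)
    (Θ : Finset Site) (hc : IsEContour l σ ε Θ)
    (j : ℤ) (hj : j = 1 ∨ j = -1 ∨ j = 2 ∨ j = -2)
    (htj : touches l j (contourOf Θ))
    (hone : ∀ j', (j' = 1 ∨ j' = -1 ∨ j' = 2 ∨ j' = -2) → j' ≠ j →
      ¬ touches l j' (contourOf Θ)) :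
    ((j = 1 ∨ j = -1) → (horizCount (contourOf Θ) : ℝ) ≤ dH l ω [Θ] σ) ∧
      ((j = 2 ∨ j = -2) → (vertCount (contourOf Θ) : ℝ) ≤ dH l ω [Θ] σ) := by
  classical
  have hT := theta_subset hc
  have hdH := dH_bound l σ ε ω Θ hσ hε hω hc
  have hout := eout_le l Θ hT
  constructor
  · intro hj1
    have hcount : horizCount (contourOf Θ) + ((contourOf Θ) ∩ boxBdry l).card ≤
        (Ecross l Θ).card := by
      rcases hj1 with rfl | rfl
      · exact count_side1 l Θ hT (hone 2 (by norm_num) (by norm_num))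
          (hone (-2) (by norm_num) (by norm_num)) (hone (-1) (by norm_num) (by norm_num))
      · exact count_sideN1 l Θ hT (hone 2 (by norm_num) (by norm_num))
          (hone (-2) (by norm_num) (by norm_num)) (hone 1 (by norm_num) (by norm_num))
    have h1 : ((Eout l Θ).card : ℝ) ≤ ((contourOf Θ ∩ boxBdry l).card : ℝ) := by
      exact_mod_cast hout
    have h2 : (horizCount (contourOf Θ) : ℝ) + ((contourOf Θ ∩ boxBdry l).card : ℝ) ≤
        ((Ecross l Θ).card : ℝ) := by exact_mod_cast hcount
    linarith
  · intro hj2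
    have hcount : vertCount (contourOf Θ) + ((contourOf Θ) ∩ boxBdry l).card ≤
        (Ecross l Θ).card := by
      rcases hj2 with rfl | rfl
      · exact count_side2 l Θ hT (hone 1 (by norm_num) (by norm_num))
          (hone (-1) (by norm_num) (by norm_num)) (hone (-2) (by norm_num) (by norm_num))
      · exact count_sideN2 l Θ hT (hone 1 (by norm_num) (by norm_num))
          (hone (-1) (by norm_num) (by norm_num)) (hone 2 (by norm_num) (by norm_num))
    have h1 : ((Eout l Θ).card : ℝ) ≤ ((contourOf Θ ∩ boxBdry l).card : ℝ) := by
      exact_mod_cast hout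
    have h2 : (vertCount (contourOf Θ) : ℝ) + ((contourOf Θ ∩ boxBdry l).card : ℝ) ≤
        ((Ecross l Θ).card : ℝ) := by exact_mod_cast hcount
    linarith
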